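/- Let a, b, x, y : ℤ → ℂ be sequences, define α(k,n) = x(k)·a(n) + y(k)·b(n) for all integers k, n, and assume α(n,n) ≠ 0 for every integer n. Let β : ℤ × ℤ → ℂ be antisymmetric (β(n,k) = −β(k,n)) with β(n−1,n) = a(n)·b(n−1) − a(n−1)·b(n) for every integer n. Then α and β satisfy the triple sum identity (TSI) if and only if β(k,n) = a(n)·b(k) − a(k)·b(n) for all integers k, n. -/

import Mathlib

/-- Corollary 3.7 (Wang–Ma): with `α k n = x k * a n + y k * b n` (nonzero on
the diagonal) and `β` antisymmetric with `β (n-1) n = a n * b (n-1) - a (n-1) * b n`,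
`α` and `β` satisfy the triple sum identity if and only if
`β k n = a n * b k - a k * b n` for all integers `k, n`. -/
theorem linear_alpha_TSI_iff
    (a b x y : ℤ → ℂ)
    (hα : ∀ n : ℤ, x n * a n + y n * b n ≠ 0)
    (β : ℤ → ℤ → ℂ)
    (hanti : ∀ n k : ℤ, β n k = -β k n)
    (hβinit : ∀ n : ℤ, β (n - 1) n = a n * b (n - 1) - a (n - 1) * b n) :
    (∀ n k p q : ℤ,
        (x n * a p + y n * b p) * β q k + (x n * a q + y n * b q) * β k p +
          (x n * a k + y n * b k) * β p q = 0)
      ↔ (∀ k n : ℤ, β k n = a n * b k - a k * b n) := by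
  constructor
  · intro h k
    -- D k p := β k p - (a p * b k - a k * b p); show D k p = 0 for all p
    have hdiag : β k k = 0 := by
      have e := hanti k k; linear_combination e / 2
    have rec1 : ∀ p : ℤ,
        (x (p-1) * a (p-1) + y (p-1) * b (p-1)) *
          (β k p - (a p * b k - a k * b p)) =
        (x (p-1) * a p + y (p-1) * b p) *
          (β k (p-1) - (a (p-1) * b k - a k * b (p-1))) := by
      intro p
      have h1 := h (p-1) k p (p-1)
      rw [hanti (p-1) k, hanti p (p-1), hβinit p] at h1
      linear_combination h1
    have rec2 : ∀ p : ℤ,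
        (x (p+1) * a (p+1) + y (p+1) * b (p+1)) *
          (β k p - (a p * b k - a k * b p)) =
        (x (p+1) * a p + y (p+1) * b p) *
          (β k (p+1) - (a (p+1) * b k - a k * b (p+1))) := by
      intro p
      have h1 := h (p+1) k p (p+1)
      have h3 := hβinit (p+1)
      simp only [add_sub_cancel_right] at h3
      rw [hanti (p+1) k, h3] at h1
      linear_combination h1
    have key : ∀ j : ℤ, β k (k + j) = a (k + j) * b k - a k * b (k + j) := by
      intro j
      induction j using Int.induction_on with
      | zero => simp [hdiag]
      | succ i ih =>
        have hr := rec1 (k + (i + 1))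
        have hidx : k + (i + 1) - 1 = k + i := by ring
        rw [hidx] at hr
        have h0 : β k (k + i) - (a (k + i) * b k - a k * b (k + i)) = 0 := by
          rw [ih]; ring
        rw [h0, mul_zero] at hr
        have := mul_eq_zero.mp hr
        rcases this with h' | h'
        · exact absurd h' (hα (k + i))
        · linear_combination h'
      | pred i ih =>
        have hr := rec2 (k + (-i - 1))
        have hidx : k + (-i - 1) + 1 = k + -i := by ring
        rw [hidx] at hr
        have h0 : β k (k + -i) - (a (k + -i) * b k - a k * b (k + -i)) = 0 := by
          rw [ih]; ring
        rw [h0, mul_zero] at hr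
        have := mul_eq_zero.mp hr
        rcases this with h' | h'
        · exact absurd h' (hα (k + -i))
        · linear_combination h'
    intro n
    have := key (n - k)
    have hidx : k + (n - k) = n := by ring
    rwa [hidx] at this
  · intro hβ n k p q
    rw [hβ q k, hβ k p, hβ p q]; ring
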